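/- Let dim be a Sylvester module rank function for a unital ring R. Let M be a finitely generated R-module, written as M = P/N for some finitely generated projective R-module P and submodule N ⊆ P, and also as M = Q/N' for a finitely generated projective Q and N' ⊆ Q. Then inf over finitely generated submodules N₀ ⊆ N of dim(P/N₀) equals inf over finitely generated submodules N₀' ⊆ N' of dim(Q/N₀'). -/

import Mathlib

universe u
open scoped NNReal ENNReal

/-- A Sylvester module rank function for a unital ring `R`: an `ℝ≥0`-valued function on
(finitely presented) left `R`-modules satisfying normalization, direct sum additivity and
the exactness inequalities. -/
structure SylvesterModuleRank (R : Type u) [Ring R] where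
  d : ∀ (M : Type u) [AddCommGroup M] [Module R M], ℝ≥0
  iso_invariant : ∀ (M N : Type u) [AddCommGroup M] [Module R M] [AddCommGroup N] [Module R N],
      Module.FinitePresentation R M → (M ≃ₗ[R] N) → d M = d N
  d_zero : d PUnit = 0
  d_ring : d R = 1
  d_prod : ∀ (M N : Type u) [AddCommGroup M] [Module R M] [AddCommGroup N] [Module R N],
      Module.FinitePresentation R M → Module.FinitePresentation R N →
      d (M × N) = d M + d N
  d_exact : ∀ (M₁ M₂ M₃ : Type u) [AddCommGroup M₁] [Module R M₁] [AddCommGroup M₂]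
      [Module R M₂] [AddCommGroup M₃] [Module R M₃]
      (α : M₁ →ₗ[R] M₂) (β : M₂ →ₗ[R] M₃),
      Module.FinitePresentation R M₁ → Module.FinitePresentation R M₂ →
      Module.FinitePresentation R M₃ →
      Function.Exact α β → Function.Surjective β →
      d M₃ ≤ d M₂ ∧ d M₂ ≤ d M₁ + d M₃

/-- For finitely presented modules, `d` is monotone under surjections. -/
lemma SylvesterModuleRank.d_le_of_surjective (R : Type u) [Ring R]
    (dim : SylvesterModuleRank R) (M₂ M₃ : Type u) [AddCommGroup M₂] [Module R M₂]
    [AddCommGroup M₃] [Module R M₃]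
    (h₂ : Module.FinitePresentation R M₂) (h₃ : Module.FinitePresentation R M₃)
    (β : M₂ →ₗ[R] M₃) (hβ : Function.Surjective β) : dim.d M₃ ≤ dim.d M₂ := by
  have : Module.FinitePresentation R M₂ := h₂
  have : Module.FinitePresentation R M₃ := h₃
  have hker : (LinearMap.ker β).FG := Module.FinitePresentation.fg_ker β hβ
  obtain ⟨n, s, hs⟩ := Submodule.fg_iff_exists_fin_generating_family.mp hker
  set α : (Fin n → R) →ₗ[R] M₂ := Fintype.linearCombination R s with hα
  have hrange : LinearMap.range α = LinearMap.ker β := by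
    rw [hα, Fintype.range_linearCombination, hs]
  have hexact : Function.Exact α β := by
    rw [LinearMap.exact_iff]; exact hrange.symm
  exact (dim.d_exact (Fin n → R) M₂ M₃ α β
    (Module.finitePresentation_of_projective R _) h₂ h₃ hexact hβ).1

set_option maxHeartbeats 1600000 in
/-- One direction of the well-definedness. -/
lemma sylvesterModuleRank_iInf_le (R : Type u) [Ring R]
    (dim : SylvesterModuleRank R)
    (P Q : Type u) [AddCommGroup P] [Module R P] [AddCommGroup Q] [Module R Q]
    [Module.Finite R P] [Module.Projective R P] [Module.Finite R Q] [Module.Projective R Q]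
    (N : Submodule R P) (N' : Submodule R Q)
    (e : (P ⧸ N) ≃ₗ[R] (Q ⧸ N')) :
    ⨅ (N₀ : {N₀ : Submodule R P // N₀.FG ∧ N₀ ≤ N}),
        (dim.d (P ⧸ N₀.1) : ℝ≥0∞) ≤
      ⨅ (N₀' : {N₀' : Submodule R Q // N₀'.FG ∧ N₀' ≤ N'}),
        (dim.d (Q ⧸ N₀'.1) : ℝ≥0∞) := by
  -- lift maps using projectivity
  obtain ⟨g, hg⟩ := Module.projective_lifting_property N'.mkQ
    ((e : (P ⧸ N) →ₗ[R] (Q ⧸ N')).comp N.mkQ) (N'.mkQ_surjective)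
  obtain ⟨f, hf⟩ := Module.projective_lifting_property N.mkQ
    ((e.symm : (Q ⧸ N') →ₗ[R] (P ⧸ N)).comp N'.mkQ) (N.mkQ_surjective)
  have hg' : ∀ p : P, N'.mkQ (g p) = e (N.mkQ p) := fun p => congrFun (congrArg DFunLike.coe hg) p
  have hf' : ∀ q : Q, N.mkQ (f q) = e.symm (N'.mkQ q) := fun q => congrFun (congrArg DFunLike.coe hf) q
  refine le_iInf fun N₀' => ?_
  obtain ⟨hfg', hle'⟩ := N₀'.2
  -- the corrected finitely generated submodule of N
  set K : Submodule R P := Submodule.map f N₀'.1 ⊔ LinearMap.range (f ∘ₗ g - LinearMap.id)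
    with hK
  have hKfg : K.FG := by
    refine Submodule.FG.sup (hfg'.map f) ?_
    rw [← Submodule.map_top]
    exact Submodule.FG.map _ Module.Finite.fg_top
  have hKle : K ≤ N := by
    rw [hK, sup_le_iff]
    constructor
    · rintro x ⟨y, hy, rfl⟩
      have h0 : N'.mkQ y = 0 := (Submodule.Quotient.mk_eq_zero N').mpr (hle' hy)
      have : N.mkQ (f y) = 0 := by rw [hf' y, h0, map_zero]
      exact (Submodule.Quotient.mk_eq_zero N).mp this
    · rintro x ⟨p, rfl⟩
      have : N.mkQ (f (g p) - p) = 0 := by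
        rw [map_sub, hf' (g p), hg' p, LinearEquiv.symm_apply_apply, sub_self]
      exact (Submodule.Quotient.mk_eq_zero N).mp this
  -- the induced surjection Q ⧸ N₀' → P ⧸ K
  have hmap : ∀ x ∈ N₀'.1, f x ∈ K := fun x hx =>
    Submodule.mem_sup_left (Submodule.mem_map_of_mem hx)
  set β : (Q ⧸ N₀'.1) →ₗ[R] (P ⧸ K) :=
    Submodule.liftQ N₀'.1 (K.mkQ ∘ₗ f) (fun x hx => by
      simpa using (Submodule.Quotient.mk_eq_zero K).mpr (hmap x hx)) with hβ
  have hβsurj : Function.Surjective β := by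
    intro y
    obtain ⟨p, rfl⟩ := K.mkQ_surjective y
    refine ⟨N₀'.1.mkQ (g p), ?_⟩
    have h1 : β (N₀'.1.mkQ (g p)) = K.mkQ (f (g p)) := rfl
    rw [h1]
    have : f (g p) - p ∈ K := le_sup_right (α := Submodule R P) ⟨p, rfl⟩
    have h2 : K.mkQ (f (g p)) - K.mkQ p = 0 := by
      rw [← map_sub]
      exact (Submodule.Quotient.mk_eq_zero K).mpr this
    have := sub_eq_zero.mp h2
    exact this
  -- finite presentation of the two quotients
  have hPfp : Module.FinitePresentation R P := Module.finitePresentation_of_projective R P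
  have hQfp : Module.FinitePresentation R Q := Module.finitePresentation_of_projective R Q
  have hfp1 : Module.FinitePresentation R (P ⧸ K) :=
    Module.finitePresentation_of_surjective K.mkQ K.mkQ_surjective (by rwa [Submodule.ker_mkQ])
  have hfp2 : Module.FinitePresentation R (Q ⧸ N₀'.1) :=
    Module.finitePresentation_of_surjective N₀'.1.mkQ N₀'.1.mkQ_surjective
      (by rwa [Submodule.ker_mkQ])
  have hle : dim.d (P ⧸ K) ≤ dim.d (Q ⧸ N₀'.1) :=
    dim.d_le_of_surjective R (Q ⧸ N₀'.1) (P ⧸ K) hfp2 hfp1 β hβsurj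
  refine iInf_le_of_le ⟨K, hKfg, hKle⟩ ?_
  exact_mod_cast hle

/-- Let `dim` be a Sylvester module rank function for a unital ring `R`,
and let a finitely generated `R`-module `M` be written both as `P/N` and as `Q/N'` with
`P`, `Q` finitely generated projective. Then
`inf { dim (P/N₀) : N₀ ⊆ N finitely generated } = inf { dim (Q/N₀') : N₀' ⊆ N' f.g. }`,
so the extension of `dim` to finitely generated modules is well defined. -/
theorem sylvesterModuleRank_fg_extension_well_defined (R : Type u) [Ring R]
    (dim : SylvesterModuleRank R)
    (P Q : Type u) [AddCommGroup P] [Module R P] [AddCommGroup Q] [Module R Q]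
    [Module.Finite R P] [Module.Projective R P] [Module.Finite R Q] [Module.Projective R Q]
    (N : Submodule R P) (N' : Submodule R Q)
    (e : (P ⧸ N) ≃ₗ[R] (Q ⧸ N')) :
    ⨅ (N₀ : {N₀ : Submodule R P // N₀.FG ∧ N₀ ≤ N}),
        (dim.d (P ⧸ N₀.1) : ℝ≥0∞) =
      ⨅ (N₀' : {N₀' : Submodule R Q // N₀'.FG ∧ N₀' ≤ N'}),
        (dim.d (Q ⧸ N₀'.1) : ℝ≥0∞) :=
  le_antisymm (sylvesterModuleRank_iInf_le R dim P Q N N' e)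
    (sylvesterModuleRank_iInf_le R dim Q P N' N e.symm)
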